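/- Blow-up of the gradient norm of the explicit solution. Let d ≥ 1, let Ω : ℝ → ℝ be continuous, and let μ, ν be fundamental solutions at 0 of y'' + Ω y = 0. Let Q : E → ℝ be a Schwartz function with ∫_E |∇Q(x)|² dx > 0, and for t with μ(t) > 0 define u(t,x) = μ(t)^{−d/2} Q(x/μ(t)) · exp( i (μ'(t)/μ(t)) |x|²/2 − i ν(t)/μ(t) ). Then there exists T > 0 such that μ(t) > 0 for all t ∈ (0,T], and for all such t: ∫_E |∇_x u(t,x)|² dx = μ(t)^{−2} ∫_E |∇Q(x)|² dx + μ'(t)² ∫_E |x|² Q(x)² dx; consequently the L² norm of ∇_x u(t,·) tends to +∞ as t → 0⁺. -/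

import Mathlib

noncomputable section

open MeasureTheory Real Complex Filter

/-- Euclidean space `ℝ^d`. -/
abbrev Esp (d : ℕ) := EuclideanSpace ℝ (Fin d)

/-- Partial derivative in the `j`-th space direction (complex-valued functions). -/
def sderiv {d : ℕ} (j : Fin d) (f : Esp d → ℂ) (x : Esp d) : ℂ :=
  fderiv ℝ f x (EuclideanSpace.single j 1)

/-- Partial derivative in the `j`-th space direction (real-valued functions). -/
def sderivR {d : ℕ} (j : Fin d) (f : Esp d → ℝ) (x : Esp d) : ℝ :=
  fderiv ℝ f x (EuclideanSpace.single j 1)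


lemma normsq_sderiv {d : ℕ} (Q : SchwartzMap (Esp d) ℝ) (C c a b : ℝ) (j : Fin d) (x : Esp d) :
    ‖sderiv j (fun y => ((C : ℝ) : ℂ) * ((Q (c • y) : ℝ) : ℂ) *
      Complex.exp (Complex.I * ((a : ℝ) : ℂ) * ((‖y‖ ^ (2:ℕ) : ℝ) : ℂ) / 2
        - Complex.I * ((b : ℝ) : ℂ))) x‖ ^ (2:ℕ)
    = (C * (c * sderivR j (⇑Q) (c • x))) ^ (2:ℕ)
      + (C * Q (c • x) * (a * x j)) ^ (2:ℕ) := by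
  set e : Esp d := EuclideanSpace.single j 1 with he
  -- derivative of y ↦ Q (c • y)
  have hsmul : HasFDerivAt (fun y : Esp d => c • y)
      (c • ContinuousLinearMap.id ℝ (Esp d)) x := (hasFDerivAt_id x).const_smul c
  have hQc : HasFDerivAt (fun y : Esp d => Q (c • y))
      ((fderiv ℝ (⇑Q) (c • x)).comp (c • ContinuousLinearMap.id ℝ (Esp d))) x :=
    (Q.differentiableAt.hasFDerivAt).comp x hsmul
  have hQcC : HasFDerivAt (fun y : Esp d => ((Q (c • y) : ℝ) : ℂ))
      (Complex.ofRealCLM.comp ((fderiv ℝ (⇑Q) (c • x)).comp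
        (c • ContinuousLinearMap.id ℝ (Esp d)))) x :=
    Complex.ofRealCLM.hasFDerivAt.comp x hQc
  have hpre : HasFDerivAt (fun y : Esp d => ((C : ℝ) : ℂ) * ((Q (c • y) : ℝ) : ℂ))
      ((C : ℂ) • (Complex.ofRealCLM.comp ((fderiv ℝ (⇑Q) (c • x)).comp
        (c • ContinuousLinearMap.id ℝ (Esp d))))) x := hQcC.const_mul _
  -- derivative of the phase
  have hns : HasFDerivAt (fun y : Esp d => (‖y‖ ^ (2:ℕ) : ℝ)) (2 • (innerSL ℝ x)) x :=
    (hasStrictFDerivAt_norm_sq x).hasFDerivAt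
  have hnsC : HasFDerivAt (fun y : Esp d => ((‖y‖ ^ (2:ℕ) : ℝ) : ℂ))
      (Complex.ofRealCLM.comp (2 • (innerSL ℝ x))) x :=
    Complex.ofRealCLM.hasFDerivAt.comp x hns
  have hphase : HasFDerivAt (fun y : Esp d =>
      Complex.I * ((a : ℝ) : ℂ) * ((‖y‖ ^ (2:ℕ) : ℝ) : ℂ) / 2 - Complex.I * ((b : ℝ) : ℂ))
      ((2:ℂ)⁻¹ • ((Complex.I * (a : ℂ)) • (Complex.ofRealCLM.comp (2 • (innerSL ℝ x))))) x := by
    have h1 : HasFDerivAt (fun y : Esp d =>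
        Complex.I * ((a : ℝ) : ℂ) * ((‖y‖ ^ (2:ℕ) : ℝ) : ℂ))
        ((Complex.I * (a : ℂ)) • (Complex.ofRealCLM.comp (2 • (innerSL ℝ x)))) x :=
      hnsC.const_mul _
    have h2 := (h1.mul_const ((2:ℂ)⁻¹)).sub_const (Complex.I * ((b : ℝ) : ℂ))
    have h3 : HasFDerivAt (fun y : Esp d =>
        Complex.I * ((a : ℝ) : ℂ) * ((‖y‖ ^ (2:ℕ) : ℝ) : ℂ) / 2 - Complex.I * ((b : ℝ) : ℂ))
        ((2:ℂ)⁻¹ • ((Complex.I * (a : ℂ)) • (Complex.ofRealCLM.comp (2 • (innerSL ℝ x))))) x := by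
      simpa [div_eq_mul_inv, smul_smul, mul_comm] using h2
    exact h3
  have hexp := hphase.cexp
  have hF := hpre.mul hexp
  have key := hF.fderiv
  simp only [Pi.mul_def] at key
  have hval : sderiv j (fun y => ((C : ℝ) : ℂ) * ((Q (c • y) : ℝ) : ℂ) *
      Complex.exp (Complex.I * ((a : ℝ) : ℂ) * ((‖y‖ ^ (2:ℕ) : ℝ) : ℂ) / 2
        - Complex.I * ((b : ℝ) : ℂ))) x
      = Complex.exp (Complex.I * ((a : ℝ) : ℂ) * ((‖x‖ ^ (2:ℕ) : ℝ) : ℂ) / 2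
        - Complex.I * ((b : ℝ) : ℂ)) *
        (((C * (c * sderivR j (⇑Q) (c • x)) : ℝ) : ℂ)
          + ((C * Q (c • x) * (a * x j) : ℝ) : ℂ) * Complex.I) := by
    simp only [sderiv, key, ContinuousLinearMap.add_apply, ContinuousLinearMap.smul_apply,
      ContinuousLinearMap.comp_apply, ContinuousLinearMap.coe_smul', Pi.smul_apply,
      ContinuousLinearMap.id_apply, Complex.ofRealCLM_apply, innerSL_apply_apply,
      smul_eq_mul, nsmul_eq_mul]
    have hinner : (inner ℝ x e : ℝ) = x j := by
      rw [he, EuclideanSpace.inner_single_right]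
      simp [RCLike.conj_to_real]
    have hfd : (fderiv ℝ (⇑Q) (c • x)) (EuclideanSpace.single j 1) = sderivR j (⇑Q) (c • x) := rfl
    rw [hinner, (fderiv ℝ (⇑Q) (c • x)).map_smul, hfd]
    simp only [smul_eq_mul]
    push_cast
    ring
  rw [hval, norm_mul]
  have hφ : Complex.I * ((a : ℝ) : ℂ) * ((‖x‖ ^ (2:ℕ) : ℝ) : ℂ) / 2
      - Complex.I * ((b : ℝ) : ℂ) = ((a * ‖x‖ ^ (2:ℕ) / 2 - b : ℝ) : ℂ) * Complex.I := by
    push_cast; ring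
  rw [hφ]
  have h1 : ‖Complex.exp (((a * ‖x‖ ^ (2:ℕ) / 2 - b : ℝ) : ℂ) * Complex.I)‖ = 1 := by
    rw [Complex.norm_exp_ofReal_mul_I]
  rw [h1, one_mul, Complex.sq_norm, Complex.normSq_add_mul_I]

lemma esp_norm_sq_eq_sum {d : ℕ} (x : Esp d) : ‖x‖ ^ (2:ℕ) = ∑ j, (x j) ^ (2:ℕ) := by
  rw [EuclideanSpace.norm_eq, Real.sq_sqrt (by positivity)]
  simp [sq_abs]

lemma integrable_grad_sq {d : ℕ} (Q : SchwartzMap (Esp d) ℝ) :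
    Integrable (fun y : Esp d => ∑ j, (sderivR j (⇑Q) y) ^ (2:ℕ)) := by
  apply integrable_finset_sum
  intro j _
  set P : SchwartzMap (Esp d) ℝ :=
    SchwartzMap.evalCLM ℝ (Esp d) ℝ (EuclideanSpace.single j 1 : Esp d) (SchwartzMap.fderivCLM ℝ (Esp d) ℝ Q) with hP
  have hPy : ∀ y, sderivR j (⇑Q) y = P y := fun y => rfl
  simp only [hPy]
  apply Integrable.mono' ((P.integrable (μ := volume)).norm.const_mul
    (SchwartzMap.seminorm ℝ 0 0 P))
  · exact (P.continuous.pow 2).aestronglyMeasurable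
  · filter_upwards with y
    have h1 : ‖P y‖ ≤ SchwartzMap.seminorm ℝ 0 0 P := P.norm_le_seminorm ℝ y
    have : ‖(P y) ^ (2:ℕ)‖ = ‖P y‖ * ‖P y‖ := by rw [norm_pow]; ring
    rw [this]
    exact mul_le_mul_of_nonneg_right h1 (norm_nonneg _)

lemma integrable_weight_sq {d : ℕ} (Q : SchwartzMap (Esp d) ℝ) :
    Integrable (fun y : Esp d => ‖y‖ ^ (2:ℕ) * (Q y) ^ (2:ℕ)) := by
  apply Integrable.mono' ((Q.integrable_pow_mul (μ := volume) 2).const_mul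
    (SchwartzMap.seminorm ℝ 0 0 Q))
  · exact ((continuous_norm.pow 2).mul (Q.continuous.pow 2)).aestronglyMeasurable
  · filter_upwards with y
    have h1 : ‖Q y‖ ≤ SchwartzMap.seminorm ℝ 0 0 Q := Q.norm_le_seminorm ℝ y
    have h2 : ‖‖y‖ ^ (2:ℕ) * (Q y) ^ (2:ℕ)‖ = (‖y‖ ^ (2:ℕ) * ‖Q y‖) * ‖Q y‖ := by
      rw [norm_mul, norm_pow, norm_pow, norm_norm]
      ring
    rw [h2, mul_comm (SchwartzMap.seminorm ℝ 0 0 Q) _]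
    exact mul_le_mul_of_nonneg_left h1 (by positivity)

lemma gradient_identity {d : ℕ} (Q : SchwartzMap (Esp d) ℝ) (m mp b : ℝ) (hm : 0 < m) :
    (∫ x : Esp d, ∑ j, ‖sderiv j (fun y => ((m ^ (-(d:ℝ)/2) : ℝ) : ℂ) *
      ((Q (m⁻¹ • y) : ℝ) : ℂ) * Complex.exp (Complex.I * ((mp / m : ℝ) : ℂ) *
        ((‖y‖ ^ (2:ℕ) : ℝ) : ℂ) / 2 - Complex.I * ((b : ℝ) : ℂ))) x‖ ^ (2:ℕ))
    = (m ^ (2:ℕ))⁻¹ * (∫ x : Esp d, ∑ j, (sderivR j (⇑Q) x) ^ (2:ℕ))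
      + mp ^ (2:ℕ) * ∫ x : Esp d, ‖x‖ ^ (2:ℕ) * (Q x) ^ (2:ℕ) := by
  have hC2 : (m ^ (-(d:ℝ)/2)) ^ (2:ℕ) = m ^ (-(d:ℝ)) := by
    rw [← Real.rpow_natCast (m ^ (-(d:ℝ)/2)) 2, ← Real.rpow_mul hm.le]
    norm_num
  set g : Esp d → ℝ := fun y => m ^ (-(d:ℝ)) *
    ((m ^ (2:ℕ))⁻¹ * (∑ j, (sderivR j (⇑Q) y) ^ (2:ℕ))
      + mp ^ (2:ℕ) * (‖y‖ ^ (2:ℕ) * (Q y) ^ (2:ℕ))) with hg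
  have hpt : (fun x : Esp d => ∑ j, ‖sderiv j (fun y => ((m ^ (-(d:ℝ)/2) : ℝ) : ℂ) *
      ((Q (m⁻¹ • y) : ℝ) : ℂ) * Complex.exp (Complex.I * ((mp / m : ℝ) : ℂ) *
        ((‖y‖ ^ (2:ℕ) : ℝ) : ℂ) / 2 - Complex.I * ((b : ℝ) : ℂ))) x‖ ^ (2:ℕ))
      = fun x => g (m⁻¹ • x) := by
    funext x
    simp only [normsq_sderiv Q (m ^ (-(d:ℝ)/2)) m⁻¹ (mp / m) b]
    rw [Finset.sum_add_distrib, hg]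
    have hsum1 : ∑ j, (m ^ (-(d:ℝ)/2) * (m⁻¹ * sderivR j (⇑Q) (m⁻¹ • x))) ^ (2:ℕ)
        = (m ^ (-(d:ℝ)/2)) ^ (2:ℕ) * (m⁻¹) ^ (2:ℕ)
          * ∑ j, (sderivR j (⇑Q) (m⁻¹ • x)) ^ (2:ℕ) := by
      rw [Finset.mul_sum]; congr 1; funext j; ring
    have hsum2 : ∑ j, (m ^ (-(d:ℝ)/2) * Q (m⁻¹ • x) * (mp / m * x j)) ^ (2:ℕ)
        = (m ^ (-(d:ℝ)/2)) ^ (2:ℕ) * (Q (m⁻¹ • x)) ^ (2:ℕ) * (mp / m) ^ (2:ℕ)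
          * ∑ j, (x j) ^ (2:ℕ) := by
      rw [Finset.mul_sum]; congr 1; funext j; ring
    have hxsum : ∑ j, (x j) ^ (2:ℕ) = ‖x‖ ^ (2:ℕ) := (esp_norm_sq_eq_sum x).symm
    rw [hsum1, hsum2, hC2, hxsum]
    have hns : ‖m⁻¹ • x‖ ^ (2:ℕ) = (m⁻¹) ^ (2:ℕ) * ‖x‖ ^ (2:ℕ) := by
      rw [norm_smul, mul_pow, Real.norm_eq_abs, abs_of_pos (by positivity)]
    simp only [hg]
    rw [hns]
    have hmne : m ≠ 0 := hm.ne'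
    field_simp
  rw [hpt, MeasureTheory.Measure.integral_comp_inv_smul_of_nonneg volume g hm.le]
  have hfr : Module.finrank ℝ (Esp d) = d := finrank_euclideanSpace_fin
  rw [hfr, hg]
  simp only []
  rw [MeasureTheory.integral_const_mul,
    MeasureTheory.integral_add ((integrable_grad_sq Q).const_mul _)
      ((integrable_weight_sq Q).const_mul _),
    MeasureTheory.integral_const_mul, MeasureTheory.integral_const_mul]
  rw [smul_eq_mul, ← mul_assoc]
  have hpow : (m : ℝ) ^ (d : ℕ) * m ^ (-(d:ℝ)) = 1 := by
    rw [← Real.rpow_natCast m d, ← Real.rpow_add hm]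
    norm_num
  rw [hpow, one_mul]

/-- Blow-up of the gradient norm of the explicit solution
`u(t,x) = μ(t)^{−d/2} Q(x/μ(t)) e^{i(μ'(t)/μ(t))|x|²/2 − iν(t)/μ(t)}`:
on a right neighborhood `(0, T]` of `0`, `μ > 0`, the squared `L²` norm of `∇ₓu(t,·)`
equals `μ(t)^{−2} ∫|∇Q|² + μ'(t)² ∫|x|²Q²`, and the `L²` norm of the gradient
tends to `+∞` as `t → 0⁺`. -/
theorem gradient_blowup
    (d : ℕ) (hd : 1 ≤ d)
    (Ω : ℝ → ℝ) (hΩ : Continuous Ω)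
    (μ ν : ℝ → ℝ)
    (hμ : Differentiable ℝ μ) (hμ' : Differentiable ℝ (deriv μ))
    (hμODE : ∀ t, deriv (deriv μ) t + Ω t * μ t = 0)
    (hμ0 : μ 0 = 0) (hμ'0 : deriv μ 0 = 1)
    (hν : Differentiable ℝ ν) (hν' : Differentiable ℝ (deriv ν))
    (hνODE : ∀ t, deriv (deriv ν) t + Ω t * ν t = 0)
    (hν0 : ν 0 = 1) (hν'0 : deriv ν 0 = 0)
    (Q : SchwartzMap (Esp d) ℝ)
    (hQgrad : 0 < ∫ x : Esp d, ∑ j, (sderivR j (⇑Q) x) ^ (2:ℕ))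
    (u : ℝ → Esp d → ℂ)
    (hu : ∀ (t : ℝ) (x : Esp d), 0 < μ t →
      u t x = (((μ t ^ (-(d : ℝ) / 2) : ℝ)) : ℂ) * ((Q ((μ t)⁻¹ • x) : ℝ) : ℂ)
        * Complex.exp (Complex.I * ((deriv μ t / μ t : ℝ) : ℂ)
              * ((‖x‖ ^ (2:ℕ) : ℝ) : ℂ) / 2
            - Complex.I * ((ν t / μ t : ℝ) : ℂ))) :
    ∃ T > (0:ℝ), (∀ t ∈ Set.Ioc (0:ℝ) T, 0 < μ t) ∧
      (∀ t ∈ Set.Ioc (0:ℝ) T,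
        (∫ x : Esp d, ∑ j, ‖sderiv j (u t) x‖ ^ (2:ℕ))
          = (μ t ^ (2:ℕ))⁻¹ * (∫ x : Esp d, ∑ j, (sderivR j (⇑Q) x) ^ (2:ℕ))
            + (deriv μ t) ^ (2:ℕ) * ∫ x : Esp d, ‖x‖ ^ (2:ℕ) * (Q x) ^ (2:ℕ)) ∧
      Tendsto (fun t => Real.sqrt (∫ x : Esp d, ∑ j, ‖sderiv j (u t) x‖ ^ (2:ℕ)))
        (nhdsWithin 0 (Set.Ioi 0)) atTop := by
  -- Choose T with deriv μ > 0 on a neighborhood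
  have h1 : (0:ℝ) < deriv μ 0 := by rw [hμ'0]; norm_num
  have hev : ∀ᶠ t in nhds (0:ℝ), 0 < deriv μ t :=
    (hμ'.continuous.continuousAt).eventually (eventually_gt_nhds h1)
  obtain ⟨δ, hδpos, hδ⟩ := Metric.eventually_nhds_iff.mp hev
  set T : ℝ := δ / 2 with hTdef
  have hT : 0 < T := by positivity
  have hmono : StrictMonoOn μ (Set.Icc 0 T) := by
    apply strictMonoOn_of_deriv_pos (convex_Icc 0 T) hμ.continuous.continuousOn
    intro x hx
    rw [interior_Icc] at hx
    apply hδ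
    rw [Real.dist_eq, sub_zero, abs_of_pos hx.1]
    linarith [hx.2]
  have hpos : ∀ t ∈ Set.Ioc (0:ℝ) T, 0 < μ t := by
    intro t ht
    have h0m : (0:ℝ) ∈ Set.Icc (0:ℝ) T := ⟨le_refl _, hT.le⟩
    have htm : t ∈ Set.Icc (0:ℝ) T := ⟨ht.1.le, ht.2⟩
    have := hmono h0m htm ht.1
    rwa [hμ0] at this
  -- the identity
  have hident : ∀ t ∈ Set.Ioc (0:ℝ) T,
      (∫ x : Esp d, ∑ j, ‖sderiv j (u t) x‖ ^ (2:ℕ))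
        = (μ t ^ (2:ℕ))⁻¹ * (∫ x : Esp d, ∑ j, (sderivR j (⇑Q) x) ^ (2:ℕ))
          + (deriv μ t) ^ (2:ℕ) * ∫ x : Esp d, ‖x‖ ^ (2:ℕ) * (Q x) ^ (2:ℕ) := by
    intro t ht
    have hmt : 0 < μ t := hpos t ht
    have hfun : u t = fun y => ((μ t ^ (-(d:ℝ)/2) : ℝ) : ℂ) *
        ((Q ((μ t)⁻¹ • y) : ℝ) : ℂ) * Complex.exp (Complex.I * ((deriv μ t / μ t : ℝ) : ℂ) *
          ((‖y‖ ^ (2:ℕ) : ℝ) : ℂ) / 2 - Complex.I * ((ν t / μ t : ℝ) : ℂ)) :=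
      funext fun x => hu t x hmt
    rw [hfun]
    exact gradient_identity Q (μ t) (deriv μ t) (ν t / μ t) hmt
  refine ⟨T, hT, hpos, hident, ?_⟩
  -- blow-up
  set I1 : ℝ := ∫ x : Esp d, ∑ j, (sderivR j (⇑Q) x) ^ (2:ℕ) with hI1
  set I2 : ℝ := ∫ x : Esp d, ‖x‖ ^ (2:ℕ) * (Q x) ^ (2:ℕ) with hI2
  have hI2nn : 0 ≤ I2 := integral_nonneg fun x => by positivity
  have hsqrtI1 : 0 < Real.sqrt I1 := Real.sqrt_pos.mpr hQgrad
  have hμtend : Tendsto μ (nhdsWithin 0 (Set.Ioi 0)) (nhdsWithin 0 (Set.Ioi 0)) := by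
    rw [tendsto_nhdsWithin_iff]
    constructor
    · have := (hμ.continuous.tendsto 0).mono_left (nhdsWithin_le_nhds (s := Set.Ioi (0:ℝ)))
      rwa [hμ0] at this
    · filter_upwards [Ioc_mem_nhdsGT hT] with t ht
      exact hpos t ht
  have hlow : Tendsto (fun t => Real.sqrt I1 * (μ t)⁻¹) (nhdsWithin 0 (Set.Ioi 0)) atTop :=
    (tendsto_inv_nhdsGT_zero.comp hμtend).const_mul_atTop hsqrtI1
  apply tendsto_atTop_mono' _ _ hlow
  filter_upwards [Ioc_mem_nhdsGT hT] with t ht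
  have hmt : 0 < μ t := hpos t ht
  rw [hident t ht]
  have hklow : Real.sqrt I1 * (μ t)⁻¹ = Real.sqrt ((μ t ^ (2:ℕ))⁻¹ * I1) := by
    rw [Real.sqrt_mul (by positivity) I1, Real.sqrt_inv, Real.sqrt_sq hmt.le, mul_comm]
  rw [hklow]
  apply Real.sqrt_le_sqrt
  have : 0 ≤ (deriv μ t) ^ (2:ℕ) * I2 := by positivity
  linarith
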